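/- Let h : ℝ → ℝ be continuously differentiable on [0, π/2]. Then there exists a universal constant K > 0 such that ∫₀^{π/2} (h(x) - h(π/2))² dx ≤ K ∫₀^{π/2} sin²(x) * (h'(x))² dx. -/

import Mathlib

open Real in
theorem stmt4 :
    ∃ K > 0, ∀ h : ℝ → ℝ, ContDiffOn ℝ 1 h (Set.Icc 0 (π/2)) →
      ∫ x in (0:ℝ)..(π/2), (h x - h (π/2))^2
        ≤ K * ∫ x in (0:ℝ)..(π/2),
            Real.sin x ^ 2 * (derivWithin h (Set.Icc 0 (π/2)) x)^2 := by
  refine ⟨π^2, by positivity, ?_⟩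
  intro h hh
  have hπ : (0:ℝ) < π/2 := by positivity
  set I := Set.Icc (0:ℝ) (π/2) with hIdef
  set c := h (π/2) with hc
  set g := derivWithin h I with hgdef
  have hU : UniqueDiffOn ℝ I := uniqueDiffOn_Icc hπ
  have hcont : ContinuousOn h I := hh.continuousOn
  have hgc : ContinuousOn g I := hh.continuousOn_derivWithin hU le_rfl
  have huIcc : Set.uIcc (0:ℝ) (π/2) = I := Set.uIcc_of_le hπ.le
  -- continuity of various integrands
  have hcA : ContinuousOn (fun x => (h x - c)^2) I :=
    (hcont.sub continuousOn_const).pow 2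
  have hcB : ContinuousOn (fun x => x * (2*(h x - c)*g x)) I :=
    continuousOn_id.mul ((continuousOn_const.mul (hcont.sub continuousOn_const)).mul hgc)
  have hcC : ContinuousOn (fun x => (1/2)*(h x - c)^2 + 2*(x^2*(g x)^2)) I :=
    (continuousOn_const.mul hcA).add
      (continuousOn_const.mul ((continuousOn_id.pow 2).mul (hgc.pow 2)))
  have hcD : ContinuousOn (fun x : ℝ => x^2*(g x)^2) I :=
    (continuousOn_id.pow 2).mul (hgc.pow 2)
  have hcE : ContinuousOn (fun x : ℝ => (π^2/4) * (Real.sin x ^2 * (g x)^2)) I :=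
    continuousOn_const.mul ((Real.continuous_sin.continuousOn.pow 2).mul (hgc.pow 2))
  have hintA : IntervalIntegrable (fun x => (h x - c)^2) MeasureTheory.volume 0 (π/2) :=
    (huIcc ▸ hcA).intervalIntegrable
  have hintB : IntervalIntegrable (fun x => x * (2*(h x - c)*g x)) MeasureTheory.volume 0 (π/2) :=
    (huIcc ▸ hcB).intervalIntegrable
  have hintC : IntervalIntegrable (fun x => (1/2)*(h x - c)^2 + 2*(x^2*(g x)^2))
      MeasureTheory.volume 0 (π/2) := (huIcc ▸ hcC).intervalIntegrable
  have hintD : IntervalIntegrable (fun x : ℝ => x^2*(g x)^2) MeasureTheory.volume 0 (π/2) :=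
    (huIcc ▸ hcD).intervalIntegrable
  have hintE : IntervalIntegrable (fun x : ℝ => (π^2/4) * (Real.sin x ^2 * (g x)^2))
      MeasureTheory.volume 0 (π/2) := (huIcc ▸ hcE).intervalIntegrable
  -- FTC for F x = x * (h x - c)^2
  have hFcont : ContinuousOn (fun x => x * (h x - c)^2) I := continuousOn_id.mul hcA
  have hFderiv : ∀ x ∈ Set.Ioo (0:ℝ) (π/2),
      HasDerivWithinAt (fun x => x * (h x - c)^2)
        ((h x - c)^2 + x * (2*(h x - c)*g x)) (Set.Ioi x) x := by
    intro x hx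
    have hxI : I ∈ nhds x := Icc_mem_nhds hx.1 hx.2
    have hxmem : x ∈ I := ⟨hx.1.le, hx.2.le⟩
    have hd : HasDerivAt h (g x) x :=
      ((hh.differentiableOn one_ne_zero x hxmem).hasDerivWithinAt).hasDerivAt hxI
    have h1 : HasDerivAt (fun x => (h x - c)^2) (2*(h x - c)*g x) x := by
      have := (hd.sub_const c).fun_pow 2
      simpa [mul_comm, mul_assoc] using this
    have h2 : HasDerivAt (fun x => x * (h x - c)^2)
        (1 * (h x - c)^2 + x * (2*(h x - c)*g x)) x :=
      (hasDerivAt_id x).mul h1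
    simpa using h2.hasDerivWithinAt
  have hintF : IntervalIntegrable (fun x => (h x - c)^2 + x * (2*(h x - c)*g x))
      MeasureTheory.volume 0 (π/2) := hintA.add hintB
  have hzero : ∫ x in (0:ℝ)..(π/2), ((h x - c)^2 + x * (2*(h x - c)*g x)) = 0 := by
    rw [intervalIntegral.integral_eq_sub_of_hasDeriv_right_of_le hπ.le hFcont hFderiv hintF]
    simp [hc]
  rw [intervalIntegral.integral_add hintA hintB] at hzero
  -- pointwise AM-GM bound
  have hb1 : - ∫ x in (0:ℝ)..(π/2), x * (2*(h x - c)*g x)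
      ≤ ∫ x in (0:ℝ)..(π/2), ((1/2)*(h x - c)^2 + 2*(x^2*(g x)^2)) := by
    rw [← intervalIntegral.integral_neg]
    apply intervalIntegral.integral_mono_on hπ.le hintB.neg hintC
    intro x hx
    simp only [Pi.neg_apply]
    nlinarith [sq_nonneg ((h x - c) + 2*x*g x)]
  rw [intervalIntegral.integral_add ((huIcc ▸ continuousOn_const.mul hcA).intervalIntegrable)
    ((huIcc ▸ (continuousOn_const.mul ((continuousOn_id.pow 2).mul (hgc.pow 2)))).intervalIntegrable),
    intervalIntegral.integral_const_mul, intervalIntegral.integral_const_mul] at hb1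
  -- Jordan inequality step
  have hb2 : ∫ x in (0:ℝ)..(π/2), x^2*(g x)^2
      ≤ ∫ x in (0:ℝ)..(π/2), (π^2/4) * (Real.sin x ^2 * (g x)^2) := by
    apply intervalIntegral.integral_mono_on hπ.le hintD hintE
    intro x hx
    have h1 : 2/π * x ≤ Real.sin x := Real.mul_le_sin hx.1 hx.2
    have h2 : (0:ℝ) ≤ 2/π * x :=
      mul_nonneg (div_nonneg (by norm_num) Real.pi_pos.le) hx.1
    have h3 : (2/π * x)^2 ≤ Real.sin x ^ 2 := pow_le_pow_left₀ h2 h1 2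
    have hπ2 : (0:ℝ) < π^2 := by positivity
    have h4 : 4 * x^2 ≤ π^2 * Real.sin x ^2 := by
      have := mul_le_mul_of_nonneg_left h3 hπ2.le
      have hπne : π ≠ 0 := Real.pi_ne_zero
      field_simp at this
      nlinarith [this]
    nlinarith [sq_nonneg (g x)]
  rw [intervalIntegral.integral_const_mul] at hb2
  -- combine
  have hxg : ∫ x in (0:ℝ)..(π/2), x^2*(g x)^2 ≥ 0 := by
    apply intervalIntegral.integral_nonneg hπ.le
    intro x _; positivity
  linarith
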